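/- Let (α_n : n ≥ 0) be a sequence of bounded operators on 𝓗, let λ ∈ ℝ, and let u be the generalised eigenvector associated with λ with (u_0, u_1)ᵗ = α ∈ 𝓗 ⊕ 𝓗. Then for every n ≥ 1: (S_{n+1}(α, λ) − S_n(α, λ))^- ≤ (‖(sym(α_{n+1} a_{n+1}^* − a_n^* a_{n-1}^{-1} α_{n-1} a_n))^-‖ + |λ|·‖a_{n-1}^{-1} α_{n-1} a_n − α_n‖ + ‖α_n b_{n+1} − b_n a_{n-1}^{-1} α_{n-1} a_n‖)·(‖u_n‖² + ‖u_{n+1}‖²). -/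

import Mathlib

open ContinuousLinearMap Filter
open scoped ENNReal NNReal
noncomputable section

variable {H : Type*} [NormedAddCommGroup H] [InnerProductSpace ℂ H] [CompleteSpace H]

/-- The Hilbert space direct sum `𝓗 ⊕ 𝓗`. -/
abbrev H2 (H : Type*) [NormedAddCommGroup H] [InnerProductSpace ℂ H] : Type _ :=
  WithLp 2 (H × H)

/-- The column vector `(x, y)ᵗ` as an element of `𝓗 ⊕ 𝓗`. -/
def pr (x y : H) : H2 H := (WithLp.equiv 2 (H × H)).symm (x, y)

/-- The block operator `[[A, B], [C, D]]` on `𝓗 ⊕ 𝓗`. -/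
def blk (A B C D : H →L[ℂ] H) : H2 H →L[ℂ] H2 H :=
  ((WithLp.prodContinuousLinearEquiv 2 ℂ H H).symm : (H × H) →L[ℂ] H2 H) ∘L
    ((A ∘L ContinuousLinearMap.fst ℂ H H + B ∘L ContinuousLinearMap.snd ℂ H H).prod
      (C ∘L ContinuousLinearMap.fst ℂ H H + D ∘L ContinuousLinearMap.snd ℂ H H)) ∘L
    ((WithLp.prodContinuousLinearEquiv 2 ℂ H H) : H2 H →L[ℂ] (H × H))

/-- The real part `sym X = (X + X^*)/2` of a bounded operator. -/
def sym {E : Type*} [NormedAddCommGroup E] [InnerProductSpace ℂ E] [CompleteSpace E]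
    (X : E →L[ℂ] E) : E →L[ℂ] E :=
  (2 : ℂ)⁻¹ • (X + ContinuousLinearMap.adjoint X)

/-- `X` is strictly positive: `⟨Xv, v⟩ ≥ c‖v‖²` for some `c > 0`. -/
def StrictlyPos {E : Type*} [NormedAddCommGroup E] [InnerProductSpace ℂ E] [CompleteSpace E]
    (X : E →L[ℂ] E) : Prop :=
  ∃ c > (0 : ℝ), ∀ v : E, c * ‖v‖ ^ 2 ≤ (inner ℂ (X v) v : ℂ).re

/-- `X'` is a two-sided bounded inverse of `X`. -/
def Inverts (X X' : H →L[ℂ] H) : Prop := X' ∘L X = 1 ∧ X ∘L X' = 1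

/-- The formal Jacobi matrix `𝒜`: `(𝒜u)₀ = b₀u₀ + a₀u₁`,
`(𝒜u)ₙ = aₙ₋₁^* uₙ₋₁ + bₙ uₙ + aₙ uₙ₊₁` for `n ≥ 1`. -/
def jacobiA (a b : ℕ → H →L[ℂ] H) (u : ℕ → H) : ℕ → H
  | 0 => b 0 (u 0) + a 0 (u 1)
  | n + 1 => adjoint (a n) (u n) + b (n + 1) (u (n + 1)) + a (n + 1) (u (n + 2))

/-- The generalised eigenvector recurrence
`aₙ₋₁^* uₙ₋₁ + bₙ uₙ + aₙ uₙ₊₁ = z uₙ` for all `n ≥ 1`. -/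
def GenEigRec (a b : ℕ → H →L[ℂ] H) (z : ℂ) (u : ℕ → H) : Prop :=
  ∀ n : ℕ, adjoint (a n) (u n) + b (n + 1) (u (n + 1)) + a (n + 1) (u (n + 2)) = z • u (n + 1)

/-- `u` is a generalised eigenvector associated with `z`. -/
def IsGenEig (a b : ℕ → H →L[ℂ] H) (z : ℂ) (u : ℕ → H) : Prop :=
  u ≠ 0 ∧ GenEigRec a b z u

/-- `u` belongs to `ℓ²(ℕ; 𝓗)`. -/
def MemL2 (u : ℕ → H) : Prop := Summable fun n => ‖u n‖ ^ 2

/-- The transfer matrix `Bₙ(z)`; here `a'` is the sequence of inverses `aₙ⁻¹`. -/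
def transfer (a a' b : ℕ → H →L[ℂ] H) (z : ℂ) (n : ℕ) : H2 H →L[ℂ] H2 H :=
  blk 0 1 (-(a' n ∘L adjoint (a (n - 1)))) (a' n ∘L (z • (1 : H →L[ℂ] H) - b n))

/-- `prodD B n k = B (n+k-1) ∘ ⋯ ∘ B n`. -/
def prodD (B : ℕ → (H2 H →L[ℂ] H2 H)) : ℕ → ℕ → (H2 H →L[ℂ] H2 H)
  | _, 0 => 1
  | n, k + 1 => B (n + k) ∘L prodD B n k

/-- `sym (diag(a_{n+N-1}, a_{n+N-1}^*) · E · Xₙ(z))` where `Xₙ(z) = B_{n+N-1}(z)⋯Bₙ(z)`. -/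
def turanOp (a a' b : ℕ → H →L[ℂ] H) (N : ℕ) (z : ℂ) (n : ℕ) : H2 H →L[ℂ] H2 H :=
  sym (blk (a (n + N - 1)) 0 0 (adjoint (a (n + N - 1))) ∘L blk 0 (-1) 1 0 ∘L
    prodD (transfer a a' b z) n N)

/-- The `N`-shifted Turán determinant `Sₙ(α, z)` of a generalised eigenvector `u`. -/
def turanS (a a' b : ℕ → H →L[ℂ] H) (N : ℕ) (z : ℂ) (u : ℕ → H) (n : ℕ) : ℝ :=
  (inner ℂ (turanOp a a' b N z n (pr (u (n - 1)) (u n))) (pr (u (n - 1)) (u n)) : ℂ).re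

/-- The family `{Q^z : z ∈ K}` is uniformly non-degenerated on `K`, where
`Qₙ^z(v) = ‖a_{n+N-1}‖⁻¹ ⟨sym(diag(a_{n+N-1}, a_{n+N-1}^*)·E·Xₙ(z)) v, v⟩`. -/
def UnifNonDeg (a a' b : ℕ → H →L[ℂ] H) (N : ℕ) (K : Set ℂ) : Prop :=
  ∃ c ≥ (1 : ℝ), ∃ M : ℕ, 1 ≤ M ∧ ∀ v : H2 H, ∀ z ∈ K, ∀ n : ℕ, M ≤ n →
    c⁻¹ * ‖v‖ ^ 2 ≤ |‖a (n + N - 1)‖⁻¹ * (inner ℂ (turanOp a a' b N z n v) v : ℂ).re| ∧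
    |‖a (n + N - 1)‖⁻¹ * (inner ℂ (turanOp a a' b N z n v) v : ℂ).re| ≤ c * ‖v‖ ^ 2

/-- The matrix `𝓑ᵢ(z) = [[0, Id], [−Rᵢ, z Tᵢ − Qᵢ]]`. -/
def calB (T Q R : ℕ → H →L[ℂ] H) (z : ℂ) (i : ℕ) : H2 H →L[ℂ] H2 H :=
  blk 0 1 (-(R i)) (z • T i - Q i)

/-- `ℱ(λ) = sym([[0, −C_{N-1}], [C_{N-1}^*, 0]] · 𝓑_{N-1}(λ)⋯𝓑₀(λ))` from Theorem B. -/
def calF (T Q R C : ℕ → H →L[ℂ] H) (N : ℕ) (lam : ℝ) : H2 H →L[ℂ] H2 H :=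
  sym (blk 0 (-(C (N - 1))) (adjoint (C (N - 1))) 0 ∘L prodD (calB T Q R (lam : ℂ)) 0 N)

/-- The quadratic-form operator of the commutator approach (`al` is the sequence `α`):
`sym [[α_{n-1} a_{n-1}^*, −α_{n-1}(λ − bₙ)], [0, αₙ aₙ^*]]`. -/
def commOp (a b al : ℕ → H →L[ℂ] H) (lam : ℝ) (n : ℕ) : H2 H →L[ℂ] H2 H :=
  sym (blk (al (n - 1) ∘L adjoint (a (n - 1)))
    (-(al (n - 1) ∘L ((lam : ℂ) • (1 : H →L[ℂ] H) - b n))) 0 (al n ∘L adjoint (a n)))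

/-- `Sₙ(α, λ)` of the commutator approach. -/
def commS (a b al : ℕ → H →L[ℂ] H) (lam : ℝ) (u : ℕ → H) (n : ℕ) : ℝ :=
  (inner ℂ (commOp a b al lam n (pr (u (n - 1)) (u n))) (pr (u (n - 1)) (u n)) : ℂ).re

/-- `sym [[αₙ aₙ^*, −(λ − bₙ) aₙ₋₁⁻¹ αₙ₋₁ aₙ], [0, aₙ^* aₙ₋₁⁻¹ αₙ₋₁ aₙ]]`;
its normalisation converges to `C(λ)`. -/
def climOp (a a' b al : ℕ → H →L[ℂ] H) (lam : ℝ) (n : ℕ) : H2 H →L[ℂ] H2 H :=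
  sym (blk (al n ∘L adjoint (a n))
    (-((((lam : ℂ) • (1 : H →L[ℂ] H) - b n)) ∘L a' (n - 1) ∘L al (n - 1) ∘L a n))
    0
    (adjoint (a n) ∘L a' (n - 1) ∘L al (n - 1) ∘L a n))

/-- Consecutive pairs `(uₙ, uₙ₊₁)` of the generalised eigenvector with initial data `α`. -/
def genPair (a a' b : ℕ → H →L[ℂ] H) (z : ℂ) (α : H2 H) : ℕ → H × H
  | 0 => (WithLp.equiv 2 (H × H)) α
  | n + 1 =>
      let p := genPair a a' b z α n
      (p.2, a' (n + 1) (z • p.2 - b (n + 1) p.2 - adjoint (a n) p.1))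

/-- The generalised eigenvector with initial data `(u₀, u₁)ᵗ = α`. -/
def genVec (a a' b : ℕ → H →L[ℂ] H) (z : ℂ) (α : H2 H) (n : ℕ) : H :=
  (genPair a a' b z α n).1

/-- Iterated logarithm `log^{(i)}`. -/
def iterLog : ℕ → ℝ → ℝ
  | 0, x => x
  | i + 1, x => Real.log (iterLog i x)

/-- `g_j(x) = ∏_{i=1}^j log^{(i)}(x)`. -/
def gfun (j : ℕ) (x : ℝ) : ℝ := ∏ i ∈ Finset.Icc 1 j, iterLog i x

section Aux

lemma re_inner_sym' {E : Type*} [NormedAddCommGroup E] [InnerProductSpace ℂ E] [CompleteSpace E]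
    (X : E →L[ℂ] E) (v : E) :
    (inner ℂ (sym X v) v : ℂ).re = (inner ℂ (X v) v : ℂ).re := by
  have h : (inner ℂ (sym X v) v : ℂ)
      = 2⁻¹ * ((inner ℂ (X v) v : ℂ) + (starRingEnd ℂ) (inner ℂ (X v) v)) := by
    rw [sym]
    rw [ContinuousLinearMap.smul_apply, inner_smul_left, ContinuousLinearMap.add_apply,
      inner_add_left, adjoint_inner_left, ← inner_conj_symm v (X v)]
    norm_num [map_inv₀, map_ofNat]
  rw [h, Complex.add_conj]
  push_cast
  simp

lemma sym_sa' {E : Type*} [NormedAddCommGroup E] [InnerProductSpace ℂ E] [CompleteSpace E]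
    (X : E →L[ℂ] E) : IsSelfAdjoint (sym X) := by
  rw [isSelfAdjoint_iff', sym]
  rw [map_smulₛₗ, map_add, adjoint_adjoint]
  simp [add_comm, map_ofNat]

lemma negpart_bound' (A : H →L[ℂ] H) (hA : IsSelfAdjoint A) (u : H) :
    -(‖A⁻‖ * ‖u‖^2) ≤ (inner ℂ (A u) u : ℂ).re := by
  have h1 : A⁺ - A⁻ = A := CFC.posPart_sub_negPart A hA
  have h3 := ((A⁺).nonneg_iff_isPositive.mp (CFC.posPart_nonneg A)).inner_nonneg_left u
  replace h3 : 0 ≤ (inner ℂ ((A⁺) u) u : ℂ).re := by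
    simpa using (Complex.le_def.mp h3).1
  have h4 : (inner ℂ ((A⁻) u) u : ℂ).re ≤ ‖A⁻‖ * ‖u‖^2 := by
    calc (inner ℂ ((A⁻) u) u : ℂ).re ≤ ‖(A⁻) u‖ * ‖u‖ := by
          simpa using re_inner_le_norm (𝕜 := ℂ) ((A⁻) u) u
    _ ≤ (‖A⁻‖ * ‖u‖) * ‖u‖ := by gcongr; exact (A⁻).le_opNorm u
    _ = ‖A⁻‖ * ‖u‖^2 := by ring
  have h5 : (inner ℂ (A u) u : ℂ).re
      = (inner ℂ ((A⁺) u) u : ℂ).re - (inner ℂ ((A⁻) u) u : ℂ).re := by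
    conv_lhs => rw [← h1]
    simp [ContinuousLinearMap.sub_apply, inner_sub_left]
  rw [h5]
  linarith

end Aux

set_option maxHeartbeats 1000000 in
/-- Lemma `lem:2`. -/
theorem statement15 (a b a' al : ℕ → H →L[ℂ] H)
    (hinv : ∀ n, Inverts (a n) (a' n)) (hb : ∀ n, IsSelfAdjoint (b n))
    (lam : ℝ) (α : H2 H) (u : ℕ → H)
    (hu : GenEigRec a b (lam : ℂ) u) (hα : pr (u 0) (u 1) = α) :
    ∀ n : ℕ, 1 ≤ n →
      max 0 (-(commS a b al lam u (n + 1) - commS a b al lam u n)) ≤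
        (‖(sym (al (n + 1) ∘L adjoint (a (n + 1))
              - adjoint (a n) ∘L a' (n - 1) ∘L al (n - 1) ∘L a n))⁻‖
          + |lam| * ‖a' (n - 1) ∘L al (n - 1) ∘L a n - al n‖
          + ‖al n ∘L b (n + 1) - b n ∘L a' (n - 1) ∘L al (n - 1) ∘L a n‖)
        * (‖u n‖ ^ 2 + ‖u (n + 1)‖ ^ 2) := by
  intro n hn
  obtain ⟨m, rfl⟩ : ∃ m, n = m + 1 := ⟨n - 1, (Nat.succ_pred_eq_of_pos hn).symm⟩
  simp only [Nat.add_sub_cancel]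
  set x := u (m + 1) with hxdef
  set y := u (m + 1 + 1) with hydef
  set Eop : H →L[ℂ] H :=
    al (m + 1 + 1) ∘L adjoint (a (m + 1 + 1)) - adjoint (a (m + 1)) ∘L a' m ∘L al m ∘L a (m + 1)
    with hEop
  set Top : H →L[ℂ] H := a' m ∘L al m ∘L a (m + 1) - al (m + 1) with hTop
  set Qop : H →L[ℂ] H := al (m + 1) ∘L b (m + 1 + 1) - b (m + 1) ∘L a' m ∘L al m ∘L a (m + 1)
    with hQop
  set Bop : H →L[ℂ] H := (lam : ℂ) • Top + Qop with hBop
  have h0 : adjoint (a m) (u m) = (lam : ℂ) • x - b (m + 1) x - a (m + 1) y := by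
    have := hu m
    rw [← this]; abel
  have hw : u m = adjoint (a' m) ((lam : ℂ) • x - b (m + 1) x - a (m + 1) y) := by
    rw [← h0, ← ContinuousLinearMap.comp_apply, ← adjoint_comp, (hinv m).2,
      ContinuousLinearMap.one_def, adjoint_id]
    rfl
  have hb1 : ∀ v w : H, (inner ℂ (b (m + 1) v) w : ℂ) = inner ℂ v (b (m + 1) w) := by
    intro v w
    rw [← adjoint_inner_left, isSelfAdjoint_iff'.mp (hb (m + 1))]
  have e2 : commS a b al lam u (m + 1 + 1) =
      (inner ℂ ((al (m + 1) ∘L adjoint (a (m + 1))) x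
          + (-(al (m + 1) ∘L ((lam : ℂ) • (1 : H →L[ℂ] H) - b (m + 1 + 1)))) y) x
        + inner ℂ ((0 : H →L[ℂ] H) x + (al (m + 1 + 1) ∘L adjoint (a (m + 1 + 1))) y) y : ℂ).re :=
    re_inner_sym' _ _
  have e1 : commS a b al lam u (m + 1) =
      (inner ℂ ((al m ∘L adjoint (a m)) (u m)
          + (-(al m ∘L ((lam : ℂ) • (1 : H →L[ℂ] H) - b (m + 1)))) x) (u m)
        + inner ℂ ((0 : H →L[ℂ] H) (u m) + (al (m + 1) ∘L adjoint (a (m + 1))) x) x : ℂ).re :=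
    re_inner_sym' _ _
  have hdiff : commS a b al lam u (m + 1 + 1) - commS a b al lam u (m + 1)
      = (inner ℂ (Bop y) x : ℂ).re + (inner ℂ (Eop y) y : ℂ).re := by
    rw [e1, e2, ← Complex.sub_re, ← Complex.add_re]
    congr 1
    simp only [ContinuousLinearMap.comp_apply, ContinuousLinearMap.coe_comp', Function.comp_apply,
      ContinuousLinearMap.neg_apply, ContinuousLinearMap.sub_apply,
      ContinuousLinearMap.smul_apply, ContinuousLinearMap.one_apply,
      ContinuousLinearMap.add_apply, ContinuousLinearMap.zero_apply]
    rw [h0, hw, hBop, hEop, hTop, hQop]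
    simp only [ContinuousLinearMap.comp_apply, ContinuousLinearMap.coe_comp', Function.comp_apply,
      ContinuousLinearMap.neg_apply, ContinuousLinearMap.sub_apply,
      ContinuousLinearMap.smul_apply, ContinuousLinearMap.one_apply,
      ContinuousLinearMap.add_apply, ContinuousLinearMap.zero_apply]
    simp only [map_sub, map_smul, map_add, map_neg, inner_add_left, inner_sub_left, inner_neg_left,
      inner_smul_left, inner_add_right, inner_sub_right, inner_neg_right, inner_smul_right,
      adjoint_inner_right, adjoint_inner_left, zero_add, Complex.conj_ofReal, hb1]
    ring
  -- bounds
  have hsymE := negpart_bound' (sym Eop) (sym_sa' Eop) y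
  rw [re_inner_sym'] at hsymE
  have hBn : ‖Bop‖ ≤ |lam| * ‖Top‖ + ‖Qop‖ := by
    calc ‖Bop‖ ≤ ‖(lam : ℂ) • Top‖ + ‖Qop‖ := norm_add_le _ _
    _ = |lam| * ‖Top‖ + ‖Qop‖ := by rw [norm_smul]; simp [Complex.norm_real]
  have hcross : |(inner ℂ (Bop y) x : ℂ).re| ≤ (|lam| * ‖Top‖ + ‖Qop‖) * (‖y‖ * ‖x‖) := by
    calc |(inner ℂ (Bop y) x : ℂ).re| ≤ ‖(inner ℂ (Bop y) x : ℂ)‖ := by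
          simpa using RCLike.abs_re_le_norm (inner ℂ (Bop y) x : ℂ)
    _ ≤ ‖Bop y‖ * ‖x‖ := norm_inner_le_norm _ _
    _ ≤ (‖Bop‖ * ‖y‖) * ‖x‖ := by gcongr; exact Bop.le_opNorm y
    _ ≤ ((|lam| * ‖Top‖ + ‖Qop‖) * ‖y‖) * ‖x‖ := by gcongr
    _ = (|lam| * ‖Top‖ + ‖Qop‖) * (‖y‖ * ‖x‖) := by ring
  have hyx : ‖y‖ * ‖x‖ ≤ ‖x‖ ^ 2 + ‖y‖ ^ 2 := by
    nlinarith [norm_nonneg x, norm_nonneg y, sq_nonneg (‖x‖ - ‖y‖)]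
  have hy2 : ‖y‖ ^ 2 ≤ ‖x‖ ^ 2 + ‖y‖ ^ 2 := by nlinarith [sq_nonneg ‖x‖]
  have hcoef : (0:ℝ) ≤ |lam| * ‖Top‖ + ‖Qop‖ := by positivity
  apply max_le
  · positivity
  · rw [hdiff]
    have c1 : -(inner ℂ (Bop y) x : ℂ).re ≤ (|lam| * ‖Top‖ + ‖Qop‖) * (‖x‖ ^ 2 + ‖y‖ ^ 2) := by
      have h1 := neg_abs_le ((inner ℂ (Bop y) x : ℂ).re)
      have h2 : (|lam| * ‖Top‖ + ‖Qop‖) * (‖y‖ * ‖x‖)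
          ≤ (|lam| * ‖Top‖ + ‖Qop‖) * (‖x‖ ^ 2 + ‖y‖ ^ 2) := by gcongr
      linarith
    have c2 : -(inner ℂ (Eop y) y : ℂ).re ≤ ‖(sym Eop)⁻‖ * (‖x‖ ^ 2 + ‖y‖ ^ 2) := by
      have h2 : ‖(sym Eop)⁻‖ * ‖y‖ ^ 2 ≤ ‖(sym Eop)⁻‖ * (‖x‖ ^ 2 + ‖y‖ ^ 2) := by
        gcongr
      linarith
    nlinarith [c1, c2]
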